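/- arXiv:1204.4081 — 2 statements merged into one kernel-verified Lean document; each statement's English description precedes it below -/
import Mathlib

section
/- For x < -1, the difference arctan(x) - (-π/2 - 1/x) is bounded in absolute value by 1/(3|x|³). -/
open Real

lemma aux_cont : Continuous fun t : ℝ => (1 + t ^ 2)⁻¹ :=
  Continuous.inv₀ (by continuity) (fun t => by positivity)

lemma aux_key {y : ℝ} (hy : 0 ≤ y) : y - arctan y ≤ y ^ 3 / 3 ∧ arctan y ≤ y := by
  have h1 : arctan y = ∫ t in (0:ℝ)..y, (1 + t ^ 2)⁻¹ := by
    rw [integral_inv_one_add_sq, arctan_zero, sub_zero]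
  have h2 : (∫ t in (0:ℝ)..y, (1:ℝ)) = y := by simp
  have h3 : (∫ t in (0:ℝ)..y, t ^ 2) = y ^ 3 / 3 := by
    rw [integral_pow]; norm_num
  constructor
  · have heq : y - arctan y = ∫ t in (0:ℝ)..y, (1 - (1 + t ^ 2)⁻¹) := by
      rw [intervalIntegral.integral_sub intervalIntegrable_const
        (aux_cont.intervalIntegrable _ _), h2, h1]
    rw [heq, ← h3]
    apply intervalIntegral.integral_mono_on hy
    · exact ((continuous_const.sub aux_cont)).intervalIntegrable _ _
    · exact (continuous_pow 2).intervalIntegrable _ _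
    · intro t ht
      have h4 : (0:ℝ) < 1 + t ^ 2 := by positivity
      have h5 : 1 - (1 + t ^ 2)⁻¹ = t ^ 2 / (1 + t ^ 2) := by field_simp; ring
      rw [h5]
      exact div_le_self (sq_nonneg t) (by nlinarith)
  · have hmono := intervalIntegral.integral_mono_on (f := fun t : ℝ => (1 + t ^ 2)⁻¹)
      (g := fun _ : ℝ => (1:ℝ)) (μ := MeasureTheory.volume) hy (aux_cont.intervalIntegrable _ _) intervalIntegrable_const
      (fun t ht => by
        have h4 : (0:ℝ) < 1 + t ^ 2 := by positivity
        rw [inv_le_one_iff₀]; right; nlinarith)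
    rw [h2] at hmono
    rw [h1]; exact hmono

theorem arctan_expansion_neg (x : ℝ) (hx : x < -1) :
    |arctan x - (-(π / 2) - 1 / x)| ≤ 1 / (3 * |x| ^ 3) := by
  have hx0 : x < 0 := by linarith
  have hinv := arctan_inv_of_neg hx0
  set y : ℝ := -x⁻¹ with hy
  have hy0 : 0 < y := by
    rw [hy, neg_pos]
    exact inv_lt_zero.mpr hx0
  have ⟨h1, h2⟩ := aux_key hy0.le
  have harct : arctan x⁻¹ = -arctan y := by rw [hy, arctan_neg, neg_neg]
  have hexpr : arctan x - (-(π / 2) - 1 / x) = -(y - arctan y) := by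
    have : arctan x = -(π / 2) - arctan x⁻¹ := by linarith [hinv]
    rw [this, harct, one_div, hy]; ring
  rw [hexpr, abs_neg, abs_of_nonneg (by linarith)]
  have habs : |x| = -x := abs_of_neg hx0
  have heq2 : 1 / (3 * |x| ^ 3) = y ^ 3 / 3 := by
    rw [habs, hy, ← inv_neg]
    have hz : (0:ℝ) < -x := by linarith
    field_simp
  rw [heq2]; exact h1
end

section
/- Let k_i = (2π/L)n̄_i - (ε/L)·s_i + (1/L)·r_i where s_i = ∑_{j≠i} 1/(n̄_i - n̄_j), the n̄_i are distinct integers, and |r_i| ≤ Cε². Then ∑_i k_i²/2 = (2π²/L²)∑_i n̄_i² - (πε/L²)·N(N-1) + O(ε²) with an explicit constant; here we use ∑_i n̄_i·s_i = N(N-1)/2 and ε = cL/π. -/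
open Real Finset

lemma key_sum (N : ℕ) (nbar : Fin N → ℤ) (hinj : Function.Injective nbar) :
    ∑ i, (nbar i : ℝ) * (∑ j ∈ univ \ {i}, 1 / ((nbar i : ℝ) - (nbar j : ℝ)))
      = N * (N - 1) / 2 := by
  classical
  have hne : ∀ i j : Fin N, i ≠ j → ((nbar i : ℝ) - (nbar j : ℝ)) ≠ 0 := by
    intro i j hij h0
    exact hinj.ne hij (by exact_mod_cast sub_eq_zero.mp h0)
  have hfull : ∀ i : Fin N, (∑ j ∈ univ \ {i}, 1 / ((nbar i : ℝ) - (nbar j : ℝ)))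
      = ∑ j, 1 / ((nbar i : ℝ) - (nbar j : ℝ)) := by
    intro i
    refine Finset.sum_subset (Finset.subset_univ _) ?_
    intro j _ hj
    have : j = i := by simpa using hj
    simp [this]
  set f : Fin N → Fin N → ℝ := fun i j => (nbar i : ℝ) / ((nbar i : ℝ) - (nbar j : ℝ)) with hf
  have hT : ∑ i, (nbar i : ℝ) * (∑ j ∈ univ \ {i}, 1 / ((nbar i : ℝ) - (nbar j : ℝ)))
      = ∑ i, ∑ j, f i j := by
    refine Finset.sum_congr rfl fun i _ => ?_
    rw [hfull i, Finset.mul_sum]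
    refine Finset.sum_congr rfl fun j _ => ?_
    simp [hf, div_eq_mul_inv]
  have hdouble : (∑ i, ∑ j, f i j) + (∑ i, ∑ j, f i j) = N * (N - 1) := by
    have : (∑ i, ∑ j, f i j) + (∑ i, ∑ j, f i j) = ∑ i, ∑ j, (f i j + f j i) := by
      nth_rewrite 2 [Finset.sum_comm]
      rw [← Finset.sum_add_distrib]
      exact Finset.sum_congr rfl fun i _ => by rw [← Finset.sum_add_distrib]
    rw [this]
    have hterm : ∀ i j : Fin N, f i j + f j i = if i = j then 0 else 1 := by
      intro i j
      by_cases h : i = j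
      · simp [hf, h]
      · have h1 := hne i j h
        have h2 := hne j i (Ne.symm h)
        simp only [hf, if_neg h]
        field_simp
        ring
    calc ∑ i, ∑ j, (f i j + f j i) = ∑ i : Fin N, ∑ j : Fin N, (if i = j then (0:ℝ) else 1) := by
          refine Finset.sum_congr rfl fun i _ => Finset.sum_congr rfl fun j _ => hterm i j
      _ = ∑ i : Fin N, ((N : ℝ) - 1) := by
          refine Finset.sum_congr rfl fun i _ => ?_
          have : ∑ j : Fin N, (if i = j then (0:ℝ) else 1)
              = (∑ j : Fin N, (1:ℝ)) - ∑ j : Fin N, (if i = j then (1:ℝ) else 0) := by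
            rw [← Finset.sum_sub_distrib]
            refine Finset.sum_congr rfl fun j _ => by by_cases h : i = j <;> simp [h]
          rw [this]
          simp
      _ = N * (N - 1) := by simp [Finset.sum_const, mul_comm]; ring
  linarith [hT, hdouble]

theorem energy_approximation (N : ℕ) (L : ℝ) (hL : 0 < L)
    (nbar : Fin N → ℤ) (hinj : Function.Injective nbar) (C : ℝ) :
    ∃ D : ℝ, ∀ ε : ℝ, 0 < ε → ε ≤ 1 → ∀ k r : Fin N → ℝ,
      (∀ i, |r i| ≤ C * ε ^ 2) →
      (∀ i, k i = (2 * π / L) * (nbar i : ℝ)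
        - (ε / L) * (∑ j ∈ univ \ {i}, 1 / ((nbar i : ℝ) - (nbar j : ℝ)))
        + (1 / L) * r i) →
      |∑ i, (k i) ^ 2 / 2
        - ((2 * π ^ 2 / L ^ 2) * ∑ i, (nbar i : ℝ) ^ 2
          - (π * ε / L ^ 2) * N * (N - 1))| ≤ D * ε ^ 2 := by
  classical
  set s : Fin N → ℝ := fun i => ∑ j ∈ univ \ {i}, 1 / ((nbar i : ℝ) - (nbar j : ℝ)) with hs
  set M : Fin N → ℝ := fun i =>
    (s i) ^ 2 / (2 * L ^ 2) + 2 * π * |(nbar i : ℝ)| * |C| / L ^ 2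
      + |s i| * |C| / L ^ 2 + C ^ 2 / (2 * L ^ 2) with hM
  refine ⟨∑ i, M i, ?_⟩
  intro ε hε hε1 k r hr hk
  have hkey : ∑ i, (nbar i : ℝ) * s i = N * (N - 1) / 2 := key_sum N nbar hinj
  have hL2 : (0:ℝ) < L ^ 2 := by positivity
  -- rewrite the difference as a sum of per-index terms
  have hsum : ∑ i, (k i) ^ 2 / 2
        - ((2 * π ^ 2 / L ^ 2) * ∑ i, (nbar i : ℝ) ^ 2
          - (π * ε / L ^ 2) * N * (N - 1))
      = ∑ i, (ε ^ 2 * (s i) ^ 2 / (2 * L ^ 2) + 2 * π * (nbar i : ℝ) * r i / L ^ 2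
          - ε * s i * r i / L ^ 2 + (r i) ^ 2 / (2 * L ^ 2)) := by
    have hB : (π * ε / L ^ 2) * N * (N - 1)
        = ∑ i, (2 * π * ε / L ^ 2) * ((nbar i : ℝ) * s i) := by
      rw [← Finset.mul_sum, hkey]; ring
    rw [hB, Finset.mul_sum, ← Finset.sum_sub_distrib, ← Finset.sum_sub_distrib]
    refine Finset.sum_congr rfl fun i _ => ?_
    rw [hk i]
    simp only [hs]
    ring
  rw [hsum]
  have hCabs : ∀ i, |r i| ≤ |C| * ε ^ 2 := fun i =>
    (hr i).trans (by nlinarith [le_abs_self C, sq_nonneg ε])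
  calc |∑ i, (ε ^ 2 * (s i) ^ 2 / (2 * L ^ 2) + 2 * π * (nbar i : ℝ) * r i / L ^ 2
          - ε * s i * r i / L ^ 2 + (r i) ^ 2 / (2 * L ^ 2))|
      ≤ ∑ i, |ε ^ 2 * (s i) ^ 2 / (2 * L ^ 2) + 2 * π * (nbar i : ℝ) * r i / L ^ 2
          - ε * s i * r i / L ^ 2 + (r i) ^ 2 / (2 * L ^ 2)| :=
        Finset.abs_sum_le_sum_abs _ _
    _ ≤ ∑ i, M i * ε ^ 2 := by
        refine Finset.sum_le_sum fun i _ => ?_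
        have h1 : |ε ^ 2 * (s i) ^ 2 / (2 * L ^ 2)| = ε ^ 2 * (s i) ^ 2 / (2 * L ^ 2) :=
          abs_of_nonneg (by positivity)
        have h2 : |2 * π * (nbar i : ℝ) * r i / L ^ 2|
            ≤ 2 * π * |(nbar i : ℝ)| * (|C| * ε ^ 2) / L ^ 2 := by
          rw [abs_div, abs_mul, abs_mul, abs_mul, abs_of_pos hL2,
            abs_of_nonneg (by norm_num : (0:ℝ) ≤ 2), abs_of_pos pi_pos]
          gcongr
          exact hCabs i
        have h3 : |ε * s i * r i / L ^ 2| ≤ |s i| * (|C| * ε ^ 2) / L ^ 2 := by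
          rw [abs_div, abs_mul, abs_mul, abs_of_pos hL2, abs_of_pos hε]
          have : ε * |s i| * |r i| ≤ 1 * (|s i| * (|C| * ε ^ 2)) := by
            have h5 : |s i| * |r i| ≤ |s i| * (|C| * ε ^ 2) :=
              mul_le_mul_of_nonneg_left (hCabs i) (abs_nonneg (s i))
            nlinarith [abs_nonneg (s i), abs_nonneg (r i), abs_nonneg C,
              mul_nonneg (abs_nonneg (s i)) (mul_nonneg (abs_nonneg C) (sq_nonneg ε))]
          calc ε * |s i| * |r i| / L ^ 2 ≤ 1 * (|s i| * (|C| * ε ^ 2)) / L ^ 2 := by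
                gcongr
            _ = |s i| * (|C| * ε ^ 2) / L ^ 2 := by ring
        have h4 : |(r i) ^ 2 / (2 * L ^ 2)| ≤ C ^ 2 * ε ^ 2 / (2 * L ^ 2) := by
          rw [abs_div, abs_of_pos (by positivity : (0:ℝ) < 2 * L ^ 2), abs_pow]
          have hb : |r i| ^ 2 ≤ (|C| * ε ^ 2) ^ 2 := by
            have := hCabs i
            nlinarith [abs_nonneg (r i)]
          have hb2 : (|C| * ε ^ 2) ^ 2 ≤ C ^ 2 * ε ^ 2 := by
            have heq : (|C| * ε ^ 2) ^ 2 = C ^ 2 * ε ^ 2 * (ε * ε) := by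
              rw [mul_pow, sq_abs]; ring
            rw [heq]
            have hεε : ε * ε ≤ 1 := by nlinarith
            exact mul_le_of_le_one_right (by positivity) hεε
          have : |r i| ^ 2 ≤ C ^ 2 * ε ^ 2 := hb.trans hb2
          gcongr
        have htri : |ε ^ 2 * (s i) ^ 2 / (2 * L ^ 2) + 2 * π * (nbar i : ℝ) * r i / L ^ 2
            - ε * s i * r i / L ^ 2 + (r i) ^ 2 / (2 * L ^ 2)|
            ≤ |ε ^ 2 * (s i) ^ 2 / (2 * L ^ 2)| + |2 * π * (nbar i : ℝ) * r i / L ^ 2|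
              + |ε * s i * r i / L ^ 2| + |(r i) ^ 2 / (2 * L ^ 2)| := by
          calc |ε ^ 2 * (s i) ^ 2 / (2 * L ^ 2) + 2 * π * (nbar i : ℝ) * r i / L ^ 2
              - ε * s i * r i / L ^ 2 + (r i) ^ 2 / (2 * L ^ 2)|
              ≤ |ε ^ 2 * (s i) ^ 2 / (2 * L ^ 2) + 2 * π * (nbar i : ℝ) * r i / L ^ 2
                - ε * s i * r i / L ^ 2| + |(r i) ^ 2 / (2 * L ^ 2)| := abs_add_le _ _
            _ ≤ (|ε ^ 2 * (s i) ^ 2 / (2 * L ^ 2) + 2 * π * (nbar i : ℝ) * r i / L ^ 2|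
                + |ε * s i * r i / L ^ 2|) + |(r i) ^ 2 / (2 * L ^ 2)| := by
                gcongr
                exact abs_sub _ _
            _ ≤ _ := by
                have := abs_add_le (ε ^ 2 * (s i) ^ 2 / (2 * L ^ 2))
                  (2 * π * (nbar i : ℝ) * r i / L ^ 2)
                linarith
        have hMi : M i * ε ^ 2 = (s i) ^ 2 / (2 * L ^ 2) * ε ^ 2
            + 2 * π * |(nbar i : ℝ)| * (|C| * ε ^ 2) / L ^ 2
            + |s i| * (|C| * ε ^ 2) / L ^ 2 + C ^ 2 * ε ^ 2 / (2 * L ^ 2) := by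
          simp only [hM]; ring
        rw [hMi]
        have : ε ^ 2 * (s i) ^ 2 / (2 * L ^ 2) = (s i) ^ 2 / (2 * L ^ 2) * ε ^ 2 := by ring
        linarith [htri, h1, h2, h3, h4]
    _ = (∑ i, M i) * ε ^ 2 := by rw [Finset.sum_mul]
end
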